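/- Let μ be a real 3×3 matrix, set A_j = Σ_{l=1}^{3} μ_{lj} A_l^co for j = 1,2,3 (6×6 matrices) and μ̃ = diag(μ, μ). Let u : ℝ³ → ℝ⁶ be twice continuously differentiable at x ∈ ℝ³. Then Σ_{j,k=1}^{3} Σ_{l=1}^{6} Σ_{p=1}^{6} μ̃_{lk} (A_j)_{lp} ∂_k∂_j u_p(x) = 0 and Σ_{j,k=1}^{3} Σ_{l=1}^{6} Σ_{p=1}^{6} μ̃_{l(k+3)} (A_j)_{lp} ∂_k∂_j u_p(x) = 0; that is, both components of the generalized divergence Div(A₁,A₂,A₃) applied to the generalized Maxwell operator Σ_j A_j ∂_j u vanish, so this divergence contains no second-order derivatives of u. -/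

import Mathlib

open Matrix

noncomputable section

/-- The matrices `J₁, J₂, J₃`. -/
def Jmat : Fin 3 → Matrix (Fin 3) (Fin 3) ℝ
  | 0 => !![0,0,0; 0,0,-1; 0,1,0]
  | 1 => !![0,0,1; 0,0,0; -1,0,0]
  | 2 => !![0,-1,0; 1,0,0; 0,0,0]

/-- The block matrices `A_j^co = [[0, −J_j],[J_j, 0]]`. -/
def Aco (j : Fin 3) : Matrix (Fin 6) (Fin 6) ℝ :=
  Matrix.reindex finSumFinEquiv finSumFinEquiv
    (Matrix.fromBlocks 0 (-(Jmat j)) (Jmat j) 0)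

/-- The block diagonal matrix `μ̃ = diag(μ, μ)`. -/
def mtilde (μ : Matrix (Fin 3) (Fin 3) ℝ) : Matrix (Fin 6) (Fin 6) ℝ :=
  Matrix.reindex finSumFinEquiv finSumFinEquiv (Matrix.fromBlocks μ 0 0 μ)

/-- The coefficients `A_j = Σ_l μ_{lj} A_l^co`. -/
def Amat (μ : Matrix (Fin 3) (Fin 3) ℝ) (j : Fin 3) : Matrix (Fin 6) (Fin 6) ℝ :=
  ∑ l : Fin 3, μ l j • Aco l

/-- The classical second partial derivative `∂_k ∂_j u_p (x)`. -/
def d2 (u : (Fin 3 → ℝ) → Fin 6 → ℝ) (x : Fin 3 → ℝ) (k j : Fin 3) (p : Fin 6) : ℝ :=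
  fderiv ℝ (fun y => fderiv ℝ u y (Pi.single j 1)) x (Pi.single k 1) p

lemma J_anti (l m p : Fin 3) : Jmat m l p = - Jmat l m p := by
  fin_cases l <;> fin_cases m <;> fin_cases p <;> norm_num [Jmat]

lemma Aco_cast_cast (m l p : Fin 3) : Aco m (Fin.castAdd 3 l) (Fin.castAdd 3 p) = 0 := by
  simp only [Aco, Matrix.reindex_apply, Matrix.submatrix_apply,
    finSumFinEquiv_symm_apply_castAdd, Matrix.fromBlocks_apply₁₁, Matrix.zero_apply]

lemma Aco_cast_nat (m l p : Fin 3) :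
    Aco m (Fin.castAdd 3 l) (Fin.natAdd 3 p) = -(Jmat m l p) := by
  simp only [Aco, Matrix.reindex_apply, Matrix.submatrix_apply,
    finSumFinEquiv_symm_apply_castAdd, finSumFinEquiv_symm_apply_natAdd,
    Matrix.fromBlocks_apply₁₂, Matrix.neg_apply]

lemma Aco_nat_cast (m l p : Fin 3) :
    Aco m (Fin.natAdd 3 l) (Fin.castAdd 3 p) = Jmat m l p := by
  simp only [Aco, Matrix.reindex_apply, Matrix.submatrix_apply,
    finSumFinEquiv_symm_apply_castAdd, finSumFinEquiv_symm_apply_natAdd,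
    Matrix.fromBlocks_apply₂₁]

lemma Aco_nat_nat (m l p : Fin 3) : Aco m (Fin.natAdd 3 l) (Fin.natAdd 3 p) = 0 := by
  simp only [Aco, Matrix.reindex_apply, Matrix.submatrix_apply,
    finSumFinEquiv_symm_apply_natAdd, Matrix.fromBlocks_apply₂₂, Matrix.zero_apply]

lemma Aco_anti_cast (m l : Fin 3) (p : Fin 6) :
    Aco m (Fin.castAdd 3 l) p = - Aco l (Fin.castAdd 3 m) p := by
  obtain ⟨q, rfl⟩ : ∃ q : Fin 3 ⊕ Fin 3, p = finSumFinEquiv q :=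
    ⟨finSumFinEquiv.symm p, by simp⟩
  cases q with
  | inl q =>
      rw [show finSumFinEquiv (Sum.inl q) = Fin.castAdd 3 q from rfl,
        Aco_cast_cast, Aco_cast_cast, neg_zero]
  | inr q =>
      rw [show finSumFinEquiv (Sum.inr q) = Fin.natAdd 3 q from rfl,
        Aco_cast_nat, Aco_cast_nat]
      rw [J_anti l m q, neg_neg]

lemma Aco_anti_nat (m l : Fin 3) (p : Fin 6) :
    Aco m (Fin.natAdd 3 l) p = - Aco l (Fin.natAdd 3 m) p := by
  obtain ⟨q, rfl⟩ : ∃ q : Fin 3 ⊕ Fin 3, p = finSumFinEquiv q :=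
    ⟨finSumFinEquiv.symm p, by simp⟩
  cases q with
  | inl q =>
      rw [show finSumFinEquiv (Sum.inl q) = Fin.castAdd 3 q from rfl,
        Aco_nat_cast, Aco_nat_cast]
      exact J_anti l m q
  | inr q =>
      rw [show finSumFinEquiv (Sum.inr q) = Fin.natAdd 3 q from rfl,
        Aco_nat_nat, Aco_nat_nat, neg_zero]

lemma mtilde_cast_cast (μ : Matrix (Fin 3) (Fin 3) ℝ) (l j : Fin 3) :
    mtilde μ (Fin.castAdd 3 l) (Fin.castAdd 3 j) = μ l j := by
  simp only [mtilde, Matrix.reindex_apply, Matrix.submatrix_apply,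
    finSumFinEquiv_symm_apply_castAdd, Matrix.fromBlocks_apply₁₁]
lemma mtilde_nat_cast (μ : Matrix (Fin 3) (Fin 3) ℝ) (l j : Fin 3) :
    mtilde μ (Fin.natAdd 3 l) (Fin.castAdd 3 j) = 0 := by
  simp only [mtilde, Matrix.reindex_apply, Matrix.submatrix_apply,
    finSumFinEquiv_symm_apply_castAdd, finSumFinEquiv_symm_apply_natAdd,
    Matrix.fromBlocks_apply₂₁, Matrix.zero_apply]
lemma mtilde_cast_nat (μ : Matrix (Fin 3) (Fin 3) ℝ) (l j : Fin 3) :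
    mtilde μ (Fin.castAdd 3 l) (Fin.natAdd 3 j) = 0 := by
  simp only [mtilde, Matrix.reindex_apply, Matrix.submatrix_apply,
    finSumFinEquiv_symm_apply_castAdd, finSumFinEquiv_symm_apply_natAdd,
    Matrix.fromBlocks_apply₁₂, Matrix.zero_apply]
lemma mtilde_nat_nat (μ : Matrix (Fin 3) (Fin 3) ℝ) (l j : Fin 3) :
    mtilde μ (Fin.natAdd 3 l) (Fin.natAdd 3 j) = μ l j := by
  simp only [mtilde, Matrix.reindex_apply, Matrix.submatrix_apply,
    finSumFinEquiv_symm_apply_natAdd, Matrix.fromBlocks_apply₂₂]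

/-- first-component coefficient -/
lemma C1_eq (μ : Matrix (Fin 3) (Fin 3) ℝ) (j k : Fin 3) (p : Fin 6) :
    ∑ l : Fin 6, mtilde μ l (Fin.castAdd 3 j) * Amat μ k l p
      = ∑ l : Fin 3, ∑ m : Fin 3, μ l j * μ m k * Aco m (Fin.castAdd 3 l) p := by
  have key : ∑ q : Fin 3 ⊕ Fin 3,
      (fun l => mtilde μ l (Fin.castAdd 3 j) * Amat μ k l p) (finSumFinEquiv q)
      = ∑ l : Fin 6, mtilde μ l (Fin.castAdd 3 j) * Amat μ k l p :=
    Fintype.sum_equiv finSumFinEquiv _ _ (fun q => rfl)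
  rw [← key, Fintype.sum_sum_type]
  simp only [show ∀ q : Fin 3, finSumFinEquiv (Sum.inl q) = Fin.castAdd 3 q from fun _ => rfl,
    show ∀ q : Fin 3, finSumFinEquiv (Sum.inr q) = Fin.natAdd 3 q from fun _ => rfl,
    mtilde_cast_cast, mtilde_nat_cast, zero_mul, Finset.sum_const_zero, add_zero]
  refine Finset.sum_congr rfl fun l _ => ?_
  simp only [Amat, Matrix.sum_apply, Matrix.smul_apply, smul_eq_mul, Finset.mul_sum]
  exact Finset.sum_congr rfl fun m _ => by ring

lemma C2_eq (μ : Matrix (Fin 3) (Fin 3) ℝ) (j k : Fin 3) (p : Fin 6) :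
    ∑ l : Fin 6, mtilde μ l (Fin.natAdd 3 j) * Amat μ k l p
      = ∑ l : Fin 3, ∑ m : Fin 3, μ l j * μ m k * Aco m (Fin.natAdd 3 l) p := by
  have key : ∑ q : Fin 3 ⊕ Fin 3,
      (fun l => mtilde μ l (Fin.natAdd 3 j) * Amat μ k l p) (finSumFinEquiv q)
      = ∑ l : Fin 6, mtilde μ l (Fin.natAdd 3 j) * Amat μ k l p :=
    Fintype.sum_equiv finSumFinEquiv _ _ (fun q => rfl)
  rw [← key, Fintype.sum_sum_type]
  simp only [show ∀ q : Fin 3, finSumFinEquiv (Sum.inl q) = Fin.castAdd 3 q from fun _ => rfl,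
    show ∀ q : Fin 3, finSumFinEquiv (Sum.inr q) = Fin.natAdd 3 q from fun _ => rfl,
    mtilde_cast_nat, mtilde_nat_nat, zero_mul, Finset.sum_const_zero, zero_add]
  refine Finset.sum_congr rfl fun l _ => ?_
  simp only [Amat, Matrix.sum_apply, Matrix.smul_apply, smul_eq_mul, Finset.mul_sum]
  exact Finset.sum_congr rfl fun m _ => by ring

lemma C1_anti (μ : Matrix (Fin 3) (Fin 3) ℝ) (j k : Fin 3) (p : Fin 6) :
    ∑ l : Fin 6, mtilde μ l (Fin.castAdd 3 j) * Amat μ k l p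
      = - ∑ l : Fin 6, mtilde μ l (Fin.castAdd 3 k) * Amat μ j l p := by
  rw [C1_eq, C1_eq, ← Finset.sum_neg_distrib]
  rw [Finset.sum_comm]
  refine Finset.sum_congr rfl fun m _ => ?_
  rw [← Finset.sum_neg_distrib]
  refine Finset.sum_congr rfl fun l _ => ?_
  rw [Aco_anti_cast m l]
  ring

lemma C2_anti (μ : Matrix (Fin 3) (Fin 3) ℝ) (j k : Fin 3) (p : Fin 6) :
    ∑ l : Fin 6, mtilde μ l (Fin.natAdd 3 j) * Amat μ k l p
      = - ∑ l : Fin 6, mtilde μ l (Fin.natAdd 3 k) * Amat μ j l p := by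
  rw [C2_eq, C2_eq, ← Finset.sum_neg_distrib]
  rw [Finset.sum_comm]
  refine Finset.sum_congr rfl fun m _ => ?_
  rw [← Finset.sum_neg_distrib]
  refine Finset.sum_congr rfl fun l _ => ?_
  rw [Aco_anti_nat m l]
  ring

lemma d2_symm (u : (Fin 3 → ℝ) → Fin 6 → ℝ) (x : Fin 3 → ℝ)
    (hu : ContDiffAt ℝ 2 u x) (k j : Fin 3) (p : Fin 6) :
    d2 u x k j p = d2 u x j k p := by
  have hd : DifferentiableAt ℝ (fderiv ℝ u) x :=
    (hu.fderiv_right (m := 1) (by norm_num)).differentiableAt one_ne_zero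
  have h1 : ∀ v w : Fin 3 → ℝ,
      fderiv ℝ (fun y => fderiv ℝ u y v) x w = fderiv ℝ (fderiv ℝ u) x w v := by
    intro v w
    rw [fderiv_clm_apply hd (differentiableAt_const v)]
    simp
  have hsym := hu.isSymmSndFDerivAt (by simp)
  simp only [d2, h1]
  rw [hsym.eq]

lemma sum_anti (T : Fin 3 → Fin 3 → ℝ) (h : ∀ j k, T j k = -T k j) :
    ∑ j : Fin 3, ∑ k : Fin 3, T j k = 0 := by
  have h1 : ∑ j : Fin 3, ∑ k : Fin 3, T j k = ∑ k : Fin 3, ∑ j : Fin 3, T j k :=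
    Finset.sum_comm
  have h2 : ∑ k : Fin 3, ∑ j : Fin 3, T j k = -(∑ k : Fin 3, ∑ j : Fin 3, T k j) := by
    rw [← Finset.sum_neg_distrib]
    exact Finset.sum_congr rfl fun k _ => by
      rw [← Finset.sum_neg_distrib]
      exact Finset.sum_congr rfl fun j _ => h j k
  linarith


/-- both components of the generalized divergence of the
generalized Maxwell operator `Σ_j A_j ∂_j u` contain no second-order
derivatives of `u`, i.e. the corresponding double contractions vanish. -/
theorem div_of_maxwell_operator_cancels
    (μ : Matrix (Fin 3) (Fin 3) ℝ)
    (u : (Fin 3 → ℝ) → Fin 6 → ℝ) (x : Fin 3 → ℝ)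
    (hu : ContDiffAt ℝ 2 u x) :
    (∑ j : Fin 3, ∑ k : Fin 3, ∑ l : Fin 6, ∑ p : Fin 6,
        mtilde μ l (Fin.castAdd 3 k) * Amat μ j l p * d2 u x k j p = 0) ∧
    (∑ j : Fin 3, ∑ k : Fin 3, ∑ l : Fin 6, ∑ p : Fin 6,
        mtilde μ l (Fin.natAdd 3 k) * Amat μ j l p * d2 u x k j p = 0) := by
  have hsymm := d2_symm u x hu
  have L1 : ∀ a b : Fin 3,
      (∑ l : Fin 6, ∑ p : Fin 6,
          mtilde μ l (Fin.castAdd 3 b) * Amat μ a l p * d2 u x b a p)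
        = ∑ p : Fin 6, (∑ l : Fin 6, mtilde μ l (Fin.castAdd 3 b) * Amat μ a l p)
            * d2 u x b a p := by
    intro a b
    rw [Finset.sum_comm]
    exact Finset.sum_congr rfl fun p _ => (Finset.sum_mul _ _ _).symm
  have L2 : ∀ a b : Fin 3,
      (∑ l : Fin 6, ∑ p : Fin 6,
          mtilde μ l (Fin.natAdd 3 b) * Amat μ a l p * d2 u x b a p)
        = ∑ p : Fin 6, (∑ l : Fin 6, mtilde μ l (Fin.natAdd 3 b) * Amat μ a l p)
            * d2 u x b a p := by
    intro a b
    rw [Finset.sum_comm]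
    exact Finset.sum_congr rfl fun p _ => (Finset.sum_mul _ _ _).symm
  constructor
  · refine sum_anti _ fun j k => ?_
    rw [L1 j k, L1 k j, ← Finset.sum_neg_distrib]
    refine Finset.sum_congr rfl fun p _ => ?_
    rw [hsymm k j p, C1_anti μ j k p]
    ring
  · refine sum_anti _ fun j k => ?_
    rw [L2 j k, L2 k j, ← Finset.sum_neg_distrib]
    refine Finset.sum_congr rfl fun p _ => ?_
    rw [hsymm k j p, C2_anti μ j k p]
    ring
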